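/- For every s with 1−(2/3)κ ≤ s < 1 there exists τ with 0 < τ < (1−s)/2 such that exp(f(s+τ) − f(s−τ)) = 1 + (2/3)κ. -/

import Mathlib

set_option maxHeartbeats 1000000 in
/-- With `κ` and `f` as in the context: for every `s` with `1 - (2/3)κ ≤ s < 1`
there exists `τ` with `0 < τ < (1-s)/2` such that
`exp(f(s+τ) - f(s-τ)) = 1 + (2/3)κ`. -/
theorem stmt_10 (κ : ℝ) (hκ0 : 0 < κ) (hκ1 : κ < 1/8)
    (f : ℝ → ℝ)
    (hf : ∀ s : ℝ, f s = if s ≤ 1 - κ then 0 else -Real.log (1 - ((s - 1 + κ) / κ)^2)) :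
    ∀ s : ℝ, 1 - (2/3) * κ ≤ s → s < 1 →
      ∃ τ : ℝ, 0 < τ ∧ τ < (1 - s)/2
        ∧ Real.exp (f (s + τ) - f (s - τ)) = 1 + (2/3) * κ := by
  intro s hs1 hs2
  have hκ0' : (κ:ℝ) ≠ 0 := ne_of_gt hκ0
  set a : ℝ := (s - 1 + κ) / κ with ha
  have ha3 : 1/3 ≤ a := by rw [ha, le_div_iff₀ hκ0]; nlinarith
  have ha1 : a < 1 := by rw [ha, div_lt_one hκ0]; nlinarith
  set d : ℝ := (2/3) * κ with hd
  have hd0 : 0 < d := by positivity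
  have hd1 : d < 1/12 := by rw [hd]; nlinarith
  set D : ℝ := a^2*(2+d)^2 + d^2*(1 - a^2) with hD
  have hd2 : 0 < d^2*(1-a^2) :=
    mul_pos (by positivity) (by nlinarith)
  have hDpos : a^2*(2+d)^2 < D := by rw [hD]; linarith
  have hD0 : 0 ≤ D := by rw [hD]; nlinarith
  have hrt : a*(2+d) < Real.sqrt D := by
    have h : Real.sqrt (a^2*(2+d)^2) < Real.sqrt D :=
      Real.sqrt_lt_sqrt (by positivity) hDpos
    have h2 : Real.sqrt (a^2*(2+d)^2) = a*(2+d) := by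
      rw [show a^2*(2+d)^2 = (a*(2+d))^2 by ring]
      exact Real.sqrt_sq (by nlinarith)
    linarith [h2 ▸ h]
  set t : ℝ := (Real.sqrt D - a*(2+d)) / d with ht
  have ht0 : 0 < t := div_pos (by linarith) hd0
  have htkey : d * t + a*(2+d) = Real.sqrt D := by
    rw [ht]; field_simp; ring
  have hsq : (d*t + a*(2+d))^2 = D := by
    rw [htkey]; exact Real.sq_sqrt hD0
  have h1 : d * (d*t^2 + 2*a*(2+d)*t - d*(1-a^2)) = 0 := by
    rw [hD] at hsq; linear_combination hsq
  have hQ : d*t^2 + 2*a*(2+d)*t - d*(1-a^2) = 0 := by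
    rcases mul_eq_zero.mp h1 with h | h
    · exact absurd h (ne_of_gt hd0)
    · exact h
  have hthalf : t < (1-a)/2 := by
    have key : (a*(2+d) + d*(1-a)/2)^2 - (a^2*(2+d)^2 + d^2*(1-a^2))
        = d*(1-a)*(2*a - d*(3+a)/4) := by ring
    have kpos : 0 < d*(1-a)*(2*a - d*(3+a)/4) :=
      mul_pos (mul_pos hd0 (by linarith)) (by nlinarith)
    have hpos : 0 < a*(2+d) + d*(1-a)/2 := by
      have h3 : 0 < a*(2+d) := mul_pos (by linarith) (by linarith)
      have h4 : 0 < d*(1-a) := mul_pos hd0 (by linarith)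
      linarith
    have h2 : Real.sqrt D < a*(2+d) + d*(1-a)/2 := by
      rw [Real.sqrt_lt' hpos, hD]
      linarith [key, kpos]
    rw [ht, div_lt_iff₀ hd0]
    linarith
  have hsa : 1 - s = κ * (1 - a) := by rw [ha]; field_simp; ring
  refine ⟨κ * t, by positivity, ?_, ?_⟩
  · rw [hsa]
    have := mul_lt_mul_of_pos_left hthalf hκ0
    linarith
  · have hst1 : ¬ (s + κ*t ≤ 1 - κ) := by push_neg; nlinarith
    have hst2 : ¬ (s - κ*t ≤ 1 - κ) := by
      push_neg
      have hta : t < a := by nlinarith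
      nlinarith
    have hap : (s + κ*t - 1 + κ)/κ = a + t := by rw [ha]; field_simp; ring
    have ham : (s - κ*t - 1 + κ)/κ = a - t := by rw [ha]; field_simp; ring
    have hB : 0 < 1 - (a+t)^2 := by nlinarith
    have hA : 0 < 1 - (a-t)^2 := by nlinarith
    rw [hf (s + κ*t), hf (s - κ*t), if_neg hst1, if_neg hst2, hap, ham]
    rw [show -Real.log (1-(a+t)^2) - -Real.log (1-(a-t)^2)
          = Real.log (1-(a-t)^2) - Real.log (1-(a+t)^2) by ring]
    rw [Real.exp_sub, Real.exp_log hA, Real.exp_log hB]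
    rw [div_eq_iff (ne_of_gt hB)]
    linear_combination hQ
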